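/- Local renaming of function symbols need not preserve termination: there exist TRSs R and R' and a family of term isomorphisms (φ₁, φ₂), identity on variables, mapping the two rules of R bijectively onto the rules of R', such that R is terminating but R' is not. Concretely, with F = {a, f, g, h} (ar(a)=0, ar(f)=ar(g)=ar(h)=1), 𝓡 = {f(x) → g(x), h(x) → g(a)} is terminating, 𝓡' = {f(x) → g(x), g(x) → f(a)} is not terminating, φ₁ is the identity, and φ₂ maps h ↦ g, g ↦ f, f ↦ h (fixing a and x); and indeed φ₁(f(x)→g(x)) and φ₂(h(x)→g(a)) are exactly the rules of 𝓡'. -/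

import Mathlib

set_option autoImplicit false

universe u
variable {F V F' V' F'' V'' : Type}

inductive Term (F V : Type) : Type where
  | var : V → Term F V
  | app : F → List (Term F V) → Term F V

namespace Term

def map (φF : F → F') (φV : V → V') : Term F V → Term F' V'
  | var x => var (φV x)
  | app f ts => app (φF f) (ts.attach.map fun t => map φF φV t.1)

decreasing_by
  have := List.sizeOf_lt_of_mem t.2
  simp_wf
  omega

def subst (σ : V → Term F V) : Term F V → Term F V
  | var x => σ x
  | app f ts => app f (ts.attach.map fun t => subst σ t.1)

decreasing_by
  have := List.sizeOf_lt_of_mem t.2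
  simp_wf
  omega

def vars : Term F V → Set V
  | var x => {x}
  | app _ ts => {v | ∃ t ∈ ts.attach, v ∈ vars t.1}

decreasing_by
  have := List.sizeOf_lt_of_mem t.2
  simp_wf
  omega

end Term

inductive Ctx (F V : Type) : Type where
  | hole : Ctx F V
  | app : F → List (Term F V) → Ctx F V → List (Term F V) → Ctx F V

def Ctx.fill : Ctx F V → Term F V → Term F V
  | .hole, t => t
  | .app f pre C post, t => .app f (pre ++ [C.fill t] ++ post)

def Ctx.map (φF : F → F') (φV : V → V') : Ctx F V → Ctx F' V'
  | .hole => .hole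
  | .app f pre C post => .app (φF f) (pre.map (Term.map φF φV)) (C.map φF φV) (post.map (Term.map φF φV))

abbrev Rule (F V : Type) := Term F V × Term F V

def ruleMap (φF : F → F') (φV : V → V') (p : Rule F V) : Rule F' V' :=
  (p.1.map φF φV, p.2.map φF φV)

def Rewrites (𝓡 : Set (Rule F V)) (s t : Term F V) : Prop :=
  ∃ (C : Ctx F V) (σ : V → Term F V) (p : Rule F V),
    p ∈ 𝓡 ∧ s = C.fill (p.1.subst σ) ∧ t = C.fill (p.2.subst σ)

def IsTermIso (ar : F → ℕ) (ar' : F' → ℕ) (φF : F → F') (φV : V → V') : Prop :=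
  Function.Bijective φF ∧ Function.Bijective φV ∧ ∀ f, ar' (φF f) = ar f

def IsTRS (ar : F → ℕ) (𝓡 : Set (Rule F V)) : Prop :=
  𝓡.Finite ∧ ∀ p ∈ 𝓡, (∀ x, p.1 ≠ Term.var x) ∧ p.2.vars ⊆ p.1.vars

/-- A TRS is terminating if there is no infinite sequence of rewrite steps. -/
def Terminating {F V : Type} (𝓡 : Set (Rule F V)) : Prop :=
  ¬ ∃ seq : ℕ → Term F V, ∀ n, Rewrites 𝓡 (seq n) (seq (n + 1))

inductive F12 : Type | a | f | g | h
deriving DecidableEq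

inductive V12 : Type | x
deriving DecidableEq

def ar12 : F12 → ℕ
  | .a => 0
  | _ => 1

/-- `f(x) → g(x)` -/
def rule12a : Rule F12 V12 := (Term.app .f [Term.var .x], Term.app .g [Term.var .x])
/-- `h(x) → g(a)` -/
def rule12b : Rule F12 V12 := (Term.app .h [Term.var .x], Term.app .g [Term.app .a []])
/-- `f(x) → g(x)` -/
def rule12a' : Rule F12 V12 := (Term.app .f [Term.var .x], Term.app .g [Term.var .x])
/-- `g(x) → f(a)` -/
def rule12b' : Rule F12 V12 := (Term.app .g [Term.var .x], Term.app .f [Term.app .a []])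

/-- `φ₂ : h ↦ g, g ↦ f, f ↦ h, a ↦ a`. -/
def phi2 : F12 → F12
  | .h => .g
  | .g => .f
  | .f => .h
  | .a => .a

/-- weight of a symbol: 1 for f and h, 0 otherwise -/
def w12 : F12 → ℕ
  | .f => 1
  | .h => 1
  | _ => 0

def count : Term F12 V12 → ℕ
  | .var _ => 0
  | .app f ts => w12 f + (ts.attach.map fun t => count t.1).sum
decreasing_by
  have := List.sizeOf_lt_of_mem t.2
  simp_wf
  omega

lemma count_app (f : F12) (ts : List (Term F12 V12)) :
    count (.app f ts) = w12 f + (ts.map count).sum := by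
  rw [count]
  congr 1
  exact congrArg List.sum (List.attach_map_val (l := ts) (f := count))

lemma count_fill_lt (C : Ctx F12 V12) {t u : Term F12 V12}
    (h : count t < count u) : count (C.fill t) < count (C.fill u) := by
  induction C with
  | hole => exact h
  | app f pre C post ih =>
    simp only [Ctx.fill, count_app, List.map_append, List.sum_append,
      List.map_cons, List.map_nil, List.sum_cons, List.sum_nil]
    omega

lemma subst_app (σ : V12 → Term F12 V12) (f : F12) (ts : List (Term F12 V12)) :
    Term.subst σ (.app f ts) = .app f (ts.map (Term.subst σ)) := by
  rw [Term.subst]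
  congr 1
  exact List.attach_map_val (l := ts) (f := Term.subst σ)

lemma subst_var (σ : V12 → Term F12 V12) (x : V12) :
    Term.subst σ (.var x) = σ x := by rw [Term.subst]

lemma rewrites_count_lt {s t : Term F12 V12}
    (h : Rewrites ({rule12a, rule12b} : Set (Rule F12 V12)) s t) :
    count t < count s := by
  obtain ⟨C, σ, p, hp, hs, ht⟩ := h
  subst hs ht
  apply count_fill_lt
  rcases hp with hp | hp <;> subst hp <;>
    simp [rule12a, rule12b, subst_app, subst_var, count_app, w12]

lemma map_app (φF : F12 → F12) (φV : V12 → V12) (f : F12) (ts : List (Term F12 V12)) :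
    Term.map φF φV (.app f ts) = .app (φF f) (ts.map (Term.map φF φV)) := by
  rw [Term.map]
  congr 1
  exact List.attach_map_val (l := ts) (f := Term.map φF φV)

lemma map_var (φF : F12 → F12) (φV : V12 → V12) (x : V12) :
    Term.map φF φV (.var x) = .var (φV x) := by rw [Term.map]

theorem local_F_renaming_not_preserving_termination :
    IsTermIso ar12 ar12 (id : F12 → F12) (id : V12 → V12) ∧
    IsTermIso ar12 ar12 phi2 (id : V12 → V12) ∧
    ruleMap (id : F12 → F12) (id : V12 → V12) rule12a = rule12a' ∧
    ruleMap phi2 (id : V12 → V12) rule12b = rule12b' ∧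
    Terminating ({rule12a, rule12b} : Set (Rule F12 V12)) ∧
    ¬ Terminating ({rule12a', rule12b'} : Set (Rule F12 V12)) := by
  refine ⟨⟨Function.bijective_id, Function.bijective_id, fun f => rfl⟩,
    ⟨⟨fun a b => by cases a <;> cases b <;> simp [phi2] <;> rfl,
      fun b => ⟨phi2 (phi2 b), by cases b <;> rfl⟩⟩,
      Function.bijective_id, fun f => by cases f <;> rfl⟩,
    ?_, ?_, ?_, ?_⟩
  · simp [ruleMap, rule12a, rule12a', map_app, map_var]
  · simp [ruleMap, rule12b, rule12b', map_app, map_var, phi2]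
  · -- termination of R
    rintro ⟨seq, hseq⟩
    have key : ∀ n, count (seq n) + n ≤ count (seq 0) := by
      intro n
      induction n with
      | zero => omega
      | succ n ih => have := rewrites_count_lt (hseq n); omega
    have := key (count (seq 0) + 1)
    omega
  · -- non-termination of R'
    intro hterm
    apply hterm
    refine ⟨fun n => if n % 2 = 0 then .app .f [.app .a []] else .app .g [.app .a []], fun n => ?_⟩
    rcases Nat.even_or_odd n with ⟨k, hk⟩ | ⟨k, hk⟩
    · refine ⟨.hole, fun _ => .app .a [], rule12a', Or.inl rfl, ?_, ?_⟩ <;>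
        simp [hk, Ctx.fill, rule12a', subst_app, subst_var, Nat.add_mod] <;> omega
    · refine ⟨.hole, fun _ => .app .a [], rule12b', Or.inr rfl, ?_, ?_⟩ <;>
        simp [hk, Ctx.fill, rule12b', subst_app, subst_var, Nat.add_mod] <;> omega
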